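/- Let V = (F_2)^N and let T ⊆ AGL(V,+) be an elementary abelian regular subgroup with T ≠ T_+ (the usual translation group). Then 1 ≤ dim(U(T)) ≤ N − 2, where U(T) = {v ∈ V | σ_v ∈ T} and σ_v(x) = x + v. -/

import Mathlib

lemma aux_common_ker {K V : Type*} [Field K] [AddCommGroup V] [Module K V]
    (l : List (Module.End K V)) :
    (∀ f ∈ l, ∀ g ∈ l, f * g = g * f) → (∀ f ∈ l, f * f = 0) →
    ∀ p : Submodule K V, p ≠ ⊥ → (∀ f ∈ l, ∀ x ∈ p, f x ∈ p) →
    ∃ x, x ∈ p ∧ x ≠ 0 ∧ ∀ f ∈ l, f x = 0 := by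
  induction l with
  | nil =>
    intro _ _ p hp _
    obtain ⟨x, hx, hx0⟩ := Submodule.exists_mem_ne_zero_of_ne_bot hp
    exact ⟨x, hx, hx0, by simp⟩
  | cons f l ih =>
    intro hcomm hsq p hp hinv
    set q := p ⊓ LinearMap.ker f with hqdef
    have hq : q ≠ ⊥ := by
      obtain ⟨x, hx, hx0⟩ := Submodule.exists_mem_ne_zero_of_ne_bot hp
      rw [Submodule.ne_bot_iff]
      by_cases hfx : f x = 0
      · exact ⟨x, ⟨hx, LinearMap.mem_ker.mpr hfx⟩, hx0⟩
      · refine ⟨f x, ⟨hinv f List.mem_cons_self x hx, ?_⟩, hfx⟩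
        simp only [SetLike.mem_coe, LinearMap.mem_ker]
        have : (f * f) x = 0 := by rw [hsq f List.mem_cons_self]; rfl
        simpa [Module.End.mul_apply] using this
    have hqi : ∀ g ∈ l, ∀ x ∈ q, g x ∈ q := by
      intro g hg x hx
      refine ⟨hinv g (List.mem_cons_of_mem f hg) x hx.1, ?_⟩
      simp only [SetLike.mem_coe, LinearMap.mem_ker]
      have h1 : (f * g) x = (g * f) x := by
        rw [hcomm f List.mem_cons_self g (List.mem_cons_of_mem f hg)]
      have h2 : f x = 0 := LinearMap.mem_ker.mp hx.2
      simpa [Module.End.mul_apply, h2] using h1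
    obtain ⟨x, hxq, hx0, hxl⟩ :=
      ih (fun a ha b hb => hcomm a (List.mem_cons_of_mem f ha) b (List.mem_cons_of_mem f hb))
        (fun a ha => hsq a (List.mem_cons_of_mem f ha)) q hq hqi
    refine ⟨x, hxq.1, hx0, ?_⟩
    intro g hg
    rcases List.mem_cons.mp hg with rfl | hg
    · exact LinearMap.mem_ker.mp hxq.2
    · exact hxl g hg

theorem stmt1 (N : ℕ)
    (T : Subgroup (Equiv.Perm (Fin N → ZMod 2)))
    (haff : ∀ g ∈ T, ∃ (L : (Fin N → ZMod 2) ≃ₗ[ZMod 2] (Fin N → ZMod 2))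
      (c : Fin N → ZMod 2), ∀ x, g x = L x + c)
    (hreg : ∀ x y : Fin N → ZMod 2,
      ∃! g : Equiv.Perm (Fin N → ZMod 2), g ∈ T ∧ g x = y)
    (hab : ∀ g ∈ T, ∀ h ∈ T, g * h = h * g)
    (helem : ∀ g ∈ T, g * g = 1)
    (hne : (T : Set (Equiv.Perm (Fin N → ZMod 2)))
      ≠ Set.range (fun v : Fin N → ZMod 2 =>
          (Equiv.addRight v : Equiv.Perm (Fin N → ZMod 2)))) :
    ∃ U : Submodule (ZMod 2) (Fin N → ZMod 2),
      (U : Set (Fin N → ZMod 2))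
        = {v : Fin N → ZMod 2 |
            (Equiv.addRight v : Equiv.Perm (Fin N → ZMod 2)) ∈ T} ∧
      1 ≤ Module.finrank (ZMod 2) U ∧ Module.finrank (ZMod 2) U ≤ N - 2 := by
  classical
  -- char 2 fact
  have h2 : ∀ a : Fin N → ZMod 2, a + a = 0 := by
    intro a; funext i; exact CharTwo.add_self_eq_zero (a i)
  -- translation-like elements τ v
  have hex : ∀ v : Fin N → ZMod 2, ∃ g : Equiv.Perm (Fin N → ZMod 2),
      (g ∈ T ∧ g 0 = v) ∧ ∀ y, y ∈ T → y 0 = v → y = g := by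
    intro v
    obtain ⟨g, hg, hu⟩ := hreg 0 v
    exact ⟨g, hg, fun y h1 h3 => hu y ⟨h1, h3⟩⟩
  choose τ hτ huniq using hex
  have hτT : ∀ v, τ v ∈ T := fun v => (hτ v).1
  have hτ0 : ∀ v, τ v 0 = v := fun v => (hτ v).2
  -- linear parts
  choose L c hLc using haff
  set M : (Fin N → ZMod 2) → ((Fin N → ZMod 2) →ₗ[ZMod 2] (Fin N → ZMod 2)) :=
    fun v => (L (τ v) (hτT v)).toLinearMap - LinearMap.id with hMdef
  have hc : ∀ v, c (τ v) (hτT v) = v := by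
    intro v
    have := hLc (τ v) (hτT v) 0
    rw [hτ0 v, map_zero, zero_add] at this
    exact this.symm
  have hMτ : ∀ v x, τ v x = x + M v x + v := by
    intro v x
    have h1 := hLc (τ v) (hτT v) x
    rw [hc v] at h1
    rw [h1]
    simp [hMdef]
  have hτinj : Function.Injective τ := by
    intro a b h
    rw [← hτ0 a, ← hτ0 b, h]
  have hτmul : ∀ v w, τ v * τ w = τ (τ v w) := by
    intro v w
    exact huniq (τ v w) (τ v * τ w) (mul_mem (hτT v) (hτT w))
      (by rw [Equiv.Perm.mul_apply, hτ0])
  have hsymm : ∀ v w, τ v w = τ w v := by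
    intro v w
    have h1 := hab (τ v) (hτT v) (τ w) (hτT w)
    have h3 := congrArg (fun g : Equiv.Perm (Fin N → ZMod 2) => g 0) h1
    simpa [Equiv.Perm.mul_apply, hτ0] using h3
  have hMsymm : ∀ v w, M v w = M w v := by
    intro v w
    have h1 := hsymm v w
    rw [hMτ v w, hMτ w v] at h1
    have h5 : M v w - M w v = (w + M v w + v) - (v + M w v + w) := by abel
    rw [h1, sub_self] at h5
    exact sub_eq_zero.mp h5
  have hMadd1 : ∀ a b x, M (a + b) x = M a x + M b x := by
    intro a b x
    rw [hMsymm (a + b) x, map_add, hMsymm x a, hMsymm x b]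
  -- elementary: square identities
  have key : ∀ v x, M v (M v x) + M v v = 0 := by
    intro v x
    have h1 : τ v (τ v x) = x := by
      have := helem (τ v) (hτT v)
      have h3 := congrArg (fun g : Equiv.Perm (Fin N → ZMod 2) => g x) this
      simpa [Equiv.Perm.mul_apply] using h3
    rw [hMτ v x, hMτ v (x + M v x + v), map_add, map_add] at h1
    have h4 : M v (M v x) + M v v =
        ((x + M v x + v) + (M v x + M v (M v x) + M v v) + v) - x
          - (M v x + M v x) - (v + v) := by abel
    rw [h1, h2 (M v x), h2 v] at h4
    simpa using h4
  have hMvv : ∀ v, M v v = 0 := by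
    intro v
    have := key v 0
    simpa using this
  have hnil : ∀ v x, M v (M v x) = 0 := by
    intro v x
    have := key v x
    rw [hMvv v, add_zero] at this
    exact this
  have hassoc : ∀ v w x, M v (M w x) = M (M v w) x := by
    intro v w x
    have h1 : τ v (τ w x) = τ (τ v w) x := by
      rw [← hτmul]; rfl
    rw [hMτ w x, hMτ v (x + M w x + w), map_add, map_add] at h1
    rw [hMτ v w, hMτ (w + M v w + v) x] at h1
    rw [hMadd1 (w + M v w) v x, hMadd1 w (M v w) x] at h1
    have h5 : M v (M w x) - M (M v w) x =
        ((x + M w x + w) + (M v x + M v (M w x) + M v w) + v)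
          - (x + (M w x + M (M v w) x + M v x) + (w + M v w + v)) := by abel
    rw [h1, sub_self] at h5
    exact sub_eq_zero.mp h5
  -- the subspace U
  set U : Submodule (ZMod 2) (Fin N → ZMod 2) :=
    ⨅ w : Fin N → ZMod 2, LinearMap.ker (M w) with hUdef
  have hUmem : ∀ v, v ∈ U ↔ ∀ w, M w v = 0 := by
    intro v
    simp [hUdef, Submodule.mem_iInf, LinearMap.mem_ker]
  -- σ_v = τ v when M v = 0
  have hσ : ∀ v, (∀ w, M v w = 0) → (Equiv.addRight v : Equiv.Perm (Fin N → ZMod 2)) = τ v := by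
    intro v hv
    ext x
    rw [Equiv.coe_addRight, hMτ v x, hv x, add_zero]
  -- the set equality
  have hset : (U : Set (Fin N → ZMod 2))
      = {v : Fin N → ZMod 2 | (Equiv.addRight v : Equiv.Perm (Fin N → ZMod 2)) ∈ T} := by
    ext v
    simp only [SetLike.mem_coe, Set.mem_setOf_eq, hUmem]
    constructor
    · intro hv
      rw [hσ v (fun w => by rw [hMsymm]; exact hv w)]
      exact hτT v
    · intro hv
      have h1 : (Equiv.addRight v : Equiv.Perm (Fin N → ZMod 2)) = τ v :=
        huniq v _ hv (by simp)
      intro w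
      have h3 := congrArg (fun g : Equiv.Perm (Fin N → ZMod 2) => g w) h1
      simp only [Equiv.coe_addRight] at h3
      rw [hMτ v w] at h3
      rw [hMsymm w v]
      have h5 : M v w - 0 = (w + M v w + v) - (w + v) := by abel
      rw [← h3, sub_self] at h5
      simpa using h5
  -- M is not identically zero
  have hnontriv : ¬ ∀ v w, M v w = 0 := by
    intro hall
    apply hne
    ext g
    simp only [SetLike.mem_coe, Set.mem_range]
    constructor
    · intro hg
      refine ⟨g 0, ?_⟩
      rw [hσ (g 0) (hall (g 0))]
      exact (huniq (g 0) g hg rfl).symm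
    · rintro ⟨v, rfl⟩
      rw [hσ v (hall v)]
      exact hτT v
  -- nontrivial V (N ≥ 1)
  have hN : 0 < N := by
    by_contra hN0
    push_neg at hN0
    interval_cases N
    apply hne
    have hsub : ∀ x y : Fin 0 → ZMod 2, x = y := fun x y => funext fun i => i.elim0
    have hg1 : ∀ g : Equiv.Perm (Fin 0 → ZMod 2), g = 1 :=
      fun g => Equiv.ext fun x => hsub _ _
    ext g
    simp only [SetLike.mem_coe, Set.mem_range]
    constructor
    · intro _
      exact ⟨0, by rw [hg1 (Equiv.addRight 0), hg1 g]⟩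
    · rintro ⟨v, rfl⟩
      rw [hg1 (Equiv.addRight v)]
      exact T.one_mem
  haveI : Nonempty (Fin N) := ⟨⟨0, hN⟩⟩
  haveI : Nontrivial (Fin N → ZMod 2) := inferInstance
  -- lower bound: common kernel of the commuting square-zero maps M (e i)
  have hlow : U ≠ ⊥ := by
    obtain ⟨x, _, hx0, hxl⟩ := aux_common_ker
      ((List.finRange N).map fun i => (M (Pi.single i 1) : Module.End (ZMod 2) (Fin N → ZMod 2)))
      (by
        intro f hf g hg
        obtain ⟨i, -, rfl⟩ := List.mem_map.mp hf
        obtain ⟨j, -, rfl⟩ := List.mem_map.mp hg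
        refine LinearMap.ext fun y => ?_
        simp only [Module.End.mul_apply]
        rw [hassoc, hMsymm (Pi.single i 1) (Pi.single j 1), ← hassoc])
      (by
        intro f hf
        obtain ⟨i, -, rfl⟩ := List.mem_map.mp hf
        refine LinearMap.ext fun y => ?_
        simp only [Module.End.mul_apply, LinearMap.zero_apply]
        exact hnil _ y)
      ⊤ (by
        obtain ⟨a, ha⟩ := exists_ne (0 : Fin N → ZMod 2)
        intro h
        exact ha ((Submodule.mem_bot _).mp (h ▸ Submodule.mem_top)))
      (fun f _ x _ => trivial)
    have hxi : ∀ i : Fin N, M (Pi.single i 1) x = 0 := by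
      intro i
      exact hxl _ (List.mem_map.mpr ⟨i, List.mem_finRange i, rfl⟩)
    have hxU : x ∈ U := by
      rw [hUmem]
      intro w
      rw [hMsymm w x]
      have hMx : (M x : (Fin N → ZMod 2) →ₗ[ZMod 2] (Fin N → ZMod 2)) = 0 := by
        apply LinearMap.pi_ext
        intro i r
        have : (Pi.single i r : Fin N → ZMod 2) = r • Pi.single i 1 := by
          funext j
          by_cases h : j = i
          · subst h; simp
          · simp [Pi.single_eq_of_ne h]
        rw [this, map_smul, hMsymm x (Pi.single i 1), hxi i, smul_zero]
        simp
      rw [hMx]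
      simp
    intro hU
    rw [hU] at hxU
    exact hx0 hxU
  have hfinrankV : Module.finrank (ZMod 2) (Fin N → ZMod 2) = N := by
    simp [Module.finrank_pi]
  have hlow' : 1 ≤ Module.finrank (ZMod 2) U := by
    rw [Nat.one_le_iff_ne_zero]
    intro h0
    apply hlow
    exact Submodule.finrank_eq_zero.mp h0
  -- upper bound
  have hUnetop : U ≠ ⊤ := by
    intro hU
    apply hnontriv
    intro v w
    rw [hMsymm v w]
    have : v ∈ U := hU ▸ trivial
    exact (hUmem v).mp this w
  have hub : Module.finrank (ZMod 2) U ≤ N - 2 := by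
    by_contra hcon
    push_neg at hcon
    have hrlt : Module.finrank (ZMod 2) U < N := by
      have := Submodule.finrank_lt (K := ZMod 2) (V := Fin N → ZMod 2) hUnetop
      rwa [hfinrankV] at this
    have hreq : Module.finrank (ZMod 2) U = N - 1 := by omega
    have hN2 : 2 ≤ N := by omega
    -- pick v ∉ U
    obtain ⟨v, -, hvU⟩ := SetLike.exists_of_lt hUnetop.lt_top
    set W := U ⊔ Submodule.span (ZMod 2) {v} with hWdef
    have hUW : U < W := by
      refine lt_of_le_of_ne le_sup_left ?_
      intro h
      apply hvU
      rw [h]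
      exact (le_sup_right : Submodule.span (ZMod 2) {v} ≤ W) (Submodule.mem_span_singleton_self v)
    have hWrank : Module.finrank (ZMod 2) W = N := by
      have h1 : Module.finrank (ZMod 2) U < Module.finrank (ZMod 2) W :=
        Submodule.finrank_lt_finrank_of_lt hUW
      have h3 : Module.finrank (ZMod 2) W ≤ N := by
        have := Submodule.finrank_le W
        rwa [hfinrankV] at this
      omega
    have hWtop : W = ⊤ := by
      apply Submodule.eq_top_of_finrank_eq
      rw [hWrank, hfinrankV]
    -- every element decomposes as u + c • v
    have hdec : ∀ x : Fin N → ZMod 2, ∃ u ∈ U, ∃ s : ZMod 2, x = u + s • v := by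
      intro x
      have hx : x ∈ W := hWtop ▸ trivial
      obtain ⟨u, hu, s, hs, hsum⟩ := Submodule.mem_sup.mp hx
      obtain ⟨a, rfl⟩ := Submodule.mem_span_singleton.mp hs
      exact ⟨u, hu, a, hsum.symm⟩
    apply hnontriv
    intro x y
    obtain ⟨u, hu, s, rfl⟩ := hdec x
    obtain ⟨u', hu', t, rfl⟩ := hdec y
    have hu0 : ∀ w, M u w = 0 := fun w => by
      rw [hMsymm]; exact (hUmem u).mp hu w
    have hu'0 : ∀ w, M w u' = 0 := (hUmem u').mp hu'
    rw [hMadd1 u (s • v)]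
    rw [hu0, zero_add]
    have hsmul1 : M (s • v) (u' + t • v) = s • M v (u' + t • v) := by
      rw [hMsymm, map_smul, hMsymm]
    rw [hsmul1, map_add, hu'0 v, zero_add, map_smul, hMvv, smul_zero, smul_zero]
  exact ⟨U, hset, hlow', hub⟩
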